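/- Let s > 0, n a positive integer with ⌊sn⌋ ≥ 2, α = β = ⌊sn⌋, and Δ_n(s) = ∏_{j=0}^{n−1} (α+j−1)!·(β+j−1)!·j!/(α+β+n+j−2)!. Then ψ₁(2⌊sn⌋+2n) − ψ₁(2⌊sn⌋+n) ≥ −log Δ_n(s), where ψ₁(x) = ∑_{m≤x} ψ(m) and ψ is the Chebyshev psi-function. -/

import Mathlib

open ArithmeticFunction

/-- Chebyshev's ψ-function at an integer: `ψ(m) = ∑_{j ≤ m} Λ(j)`. -/
noncomputable def chebyshevPsi (m : ℕ) : ℝ := ∑ j ∈ Finset.Icc 1 m, Λ j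

/-- `ψ₁(m) = ∑_{k ≤ m} ψ(k)`. -/
noncomputable def chebyshevPsi₁ (m : ℕ) : ℝ := ∑ k ∈ Finset.Icc 1 m, chebyshevPsi k

/-- With `α = β = ⌊sn⌋`, `Δ_n(s) = ∏_{j=0}^{n−1} (α+j−1)!·(β+j−1)!·j!/(α+β+n+j−2)!`. -/
noncomputable def Δ (s : ℝ) (n : ℕ) : ℝ :=
  ∏ j ∈ Finset.range n,
    ((⌊s * n⌋₊ + j - 1).factorial : ℝ) * ((⌊s * n⌋₊ + j - 1).factorial : ℝ) *
      (j.factorial : ℝ) / ((⌊s * n⌋₊ + ⌊s * n⌋₊ + n + j - 2).factorial : ℝ)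

namespace PsiOneAux

open Finset Polynomial

/-! ### The least common multiple of `1, …, N` -/

def dd (N : ℕ) : ℕ := (Finset.Icc 1 N).lcm _root_.id

lemma dd_ne_zero (N : ℕ) : dd N ≠ 0 := by
  intro h
  rw [dd, Finset.lcm_eq_zero_iff] at h
  simp only [Set.mem_image, mem_coe, mem_Icc, _root_.id] at h
  obtain ⟨x, hx, hx0⟩ := h
  omega

lemma dd_pos (N : ℕ) : 0 < dd N := Nat.pos_of_ne_zero (dd_ne_zero N)

lemma dvd_dd {k N : ℕ} (h1 : 1 ≤ k) (h2 : k ≤ N) : k ∣ dd N :=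
  Finset.dvd_lcm (by simp [mem_Icc, h1, h2])

lemma key_dvd (N : ℕ) :
    dd (N + 1) ∣ dd N * (if IsPrimePow (N + 1) then (N + 1).minFac else 1) := by
  have hins : Finset.Icc 1 (N + 1) = insert (N + 1) (Finset.Icc 1 N) :=
    (Finset.insert_Icc_right_eq_Icc_add_one (by omega)).symm
  have hlcm : dd (N + 1) = Nat.lcm (N + 1) (dd N) := by
    rw [dd, hins, Finset.lcm_insert]; rfl
  rw [hlcm]
  apply Nat.lcm_dvd _ (Dvd.dvd.mul_right (dvd_refl _) _)
  by_cases hpp : IsPrimePow (N + 1)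
  · rw [if_pos hpp]
    obtain ⟨p, k, hp, hk, hpk⟩ := (isPrimePow_nat_iff _).mp hpp
    have hminfac : (N + 1).minFac = p := by rw [← hpk]; exact hp.pow_minFac hk.ne'
    rw [hminfac, ← hpk]
    have h1 : p ^ (k - 1) ∣ dd N := by
      rcases Nat.eq_zero_or_pos (k - 1) with h | h
      · rw [h]; simp
      · apply dvd_dd (Nat.one_le_iff_ne_zero.mpr (pow_ne_zero _ hp.pos.ne'))
        have : p ^ (k - 1) < p ^ k := Nat.pow_lt_pow_right hp.one_lt (by omega)
        omega
    calc p ^ k = p ^ (k - 1) * p := by rw [← pow_succ]; congr 1; omega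
    _ ∣ dd N * p := mul_dvd_mul h1 (dvd_refl p)
  · rw [if_neg hpp, mul_one]
    rcases Nat.eq_zero_or_pos N with rfl | hN
    · simp
    · rw [← Nat.factorization_le_iff_dvd (by omega) (dd_ne_zero N)]
      intro p
      set v := (N + 1).factorization p with hv
      rcases Nat.eq_zero_or_pos v with h0 | h0
      · omega
      · have hp : p.Prime := Nat.prime_of_mem_primeFactors
          (by rw [← Nat.support_factorization]; exact Finsupp.mem_support_iff.mpr h0.ne')
        have hdvd : p ^ v ∣ N + 1 := Nat.ordProj_dvd _ _
        have hne : p ^ v ≠ N + 1 := by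
          intro h
          exact hpp ⟨p, v, hp.prime, h0, h⟩
        have hle : p ^ v ≤ N := by
          have := Nat.le_of_dvd (by omega) hdvd
          omega
        have : p ^ v ∣ dd N := dvd_dd (Nat.one_le_iff_ne_zero.mpr (pow_ne_zero _ hp.pos.ne')) hle
        exact (hp.pow_dvd_iff_le_factorization (dd_ne_zero N)).mp this

lemma log_dd_le_psi (N : ℕ) : Real.log (dd N) ≤ chebyshevPsi N := by
  induction N with
  | zero => simp [dd, chebyshevPsi]
  | succ N ih =>
    have hpsi : chebyshevPsi (N + 1) = chebyshevPsi N + Λ (N + 1) := by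
      rw [chebyshevPsi, chebyshevPsi, ← Finset.insert_Icc_right_eq_Icc_add_one (by omega),
        Finset.sum_insert (by simp)]
      ring
    set w : ℕ := if IsPrimePow (N + 1) then (N + 1).minFac else 1 with hw
    have hwpos : 0 < w := by
      rw [hw]; split
      · exact Nat.minFac_pos _
      · exact one_pos
    have hle : dd (N + 1) ≤ dd N * w := Nat.le_of_dvd (Nat.mul_pos (dd_pos N) hwpos) (key_dvd N)
    have hlogw : Real.log w = Λ (N + 1) := by
      rw [vonMangoldt_apply, hw]
      split
      · rfl
      · simp
    calc Real.log (dd (N + 1)) ≤ Real.log (dd N * w) := by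
          apply Real.log_le_log (by exact_mod_cast dd_pos _)
          exact_mod_cast hle
    _ = Real.log (dd N) + Real.log w := by
          push_cast
          rw [Real.log_mul (by exact_mod_cast (dd_pos N).ne') (by exact_mod_cast hwpos.ne')]
    _ ≤ chebyshevPsi N + Λ (N + 1) := by rw [hlogw]; exact add_le_add_left ih _
    _ = chebyshevPsi (N + 1) := hpsi.symm

lemma psi_mono {m n : ℕ} (h : m ≤ n) : chebyshevPsi m ≤ chebyshevPsi n :=
  Finset.sum_le_sum_of_subset_of_nonneg (Finset.Icc_subset_Icc_right h)
    (fun _ _ _ => vonMangoldt_nonneg)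

/-! ### Integrality of `d_N · u! v! / (u+v+1)!` -/

lemma beta_pascal (u v : ℕ) :
    ((u.factorial : ℝ) * v.factorial / (u + v + 1).factorial) =
      ((u + 1).factorial : ℝ) * v.factorial / ((u + 1) + v + 1).factorial +
      (u.factorial : ℝ) * (v + 1).factorial / (u + (v + 1) + 1).factorial := by
  have h1 : (u + 1) + v + 1 = (u + v + 1) + 1 := by omega
  have h2 : u + (v + 1) + 1 = (u + v + 1) + 1 := by omega
  rw [h1, h2, Nat.factorial_succ (u + v + 1), Nat.factorial_succ u, Nat.factorial_succ v]
  have hf : ((u + v + 1).factorial : ℝ) ≠ 0 := by exact_mod_cast (u + v + 1).factorial_ne_zero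
  push_cast
  field_simp
  ring

lemma exists_int (N : ℕ) : ∀ u v : ℕ, u + v + 1 ≤ N →
    ∃ z : ℤ, (z : ℝ) = (dd N : ℝ) * ((u.factorial : ℝ) * v.factorial / (u + v + 1).factorial) := by
  intro u
  induction u with
  | zero =>
    intro v h
    have hdvd : (v + 1) ∣ dd N := dvd_dd (by omega) (by omega)
    refine ⟨(dd N / (v + 1) : ℕ), ?_⟩
    rw [Int.cast_natCast, Nat.cast_div hdvd (by exact_mod_cast Nat.succ_ne_zero v)]
    have h0 : (0 + v + 1) = v + 1 := by omega
    rw [h0, Nat.factorial_zero, Nat.factorial_succ v]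
    have hf : ((v.factorial : ℝ)) ≠ 0 := by exact_mod_cast v.factorial_ne_zero
    push_cast
    field_simp
  | succ u ih =>
    intro v h
    obtain ⟨z₁, h₁⟩ := ih v (by omega)
    obtain ⟨z₂, h₂⟩ := ih (v + 1) (by omega)
    refine ⟨z₁ - z₂, ?_⟩
    push_cast
    rw [h₁, h₂, beta_pascal u v]
    ring

/-! ### The determinant evaluation -/

lemma fact_prod (k : ℕ) : ∀ t : ℕ, k.factorial * ∏ m ∈ range t, (k + m + 1) = (k + t).factorial := by
  intro t
  induction t with
  | zero => simp
  | succ t ih =>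
    rw [prod_range_succ, ← mul_assoc, ih, show k + (t + 1) = (k + t) + 1 by omega,
      Nat.factorial_succ]
    ring

lemma vdm_nat (n : ℕ) :
    (Matrix.vandermonde (fun i : Fin n => ((i : ℕ) : ℝ))).det = ∏ j ∈ range n, (j.factorial : ℝ) := by
  cases n with
  | zero => simp [Matrix.det_fin_zero]
  | succ m =>
    rw [show (fun i : Fin (m+1) => ((i : ℕ) : ℝ)) = (fun i : Fin (m+1) => (i : ℝ)) from rfl,
      Matrix.det_vandermonde_id_eq_superFactorial, ← Nat.prod_range_succ_factorial m]
    push_cast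
    rfl
lemma abs_det_M (b n : ℕ) (hn : 0 < n) :
    |(Matrix.of fun i j : Fin n => ((b + (i:ℕ)).factorial : ℝ) * ((b + (j:ℕ)).factorial : ℝ) /
        ((2*b + 1 + (i:ℕ) + (j:ℕ)).factorial : ℝ)).det| =
    ∏ j ∈ range n, ((b + j).factorial : ℝ) * ((b + j).factorial : ℝ) * (j.factorial : ℝ) /
        ((2*b + n + j).factorial : ℝ) := by
  set c : ℕ := 2*b + 1 with hc
  set H : Matrix (Fin n) (Fin n) ℝ :=
    Matrix.of fun i j : Fin n => (((c + (i:ℕ) + (j:ℕ)).factorial : ℝ))⁻¹ with hH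
  -- Step 1 : pull out the two factorial factors
  have hM : (Matrix.of fun i j : Fin n => ((b + (i:ℕ)).factorial : ℝ) * ((b + (j:ℕ)).factorial : ℝ) /
        ((2*b + 1 + (i:ℕ) + (j:ℕ)).factorial : ℝ)) =
      Matrix.of fun i j : Fin n => ((b + (i:ℕ)).factorial : ℝ) *
        ((Matrix.of fun i j : Fin n => ((b + (j:ℕ)).factorial : ℝ) * H i j) i j) := by
    ext i j
    simp only [Matrix.of_apply, hH]
    rw [div_eq_mul_inv]
    ring
  rw [hM, Matrix.det_mul_column, Matrix.det_mul_row, abs_mul, abs_mul]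
  -- Step 2 : reverse the columns of H
  have habs : |H.det| = |(H.submatrix (Equiv.refl (Fin n)) Fin.revPerm).det| :=
    (Matrix.abs_det_submatrix_equiv_equiv _ _ _).symm
  -- Step 3 : express the reversed matrix via monic polynomials
  set p : Fin n → ℝ[X] := fun j =>
    ∏ t ∈ range (j:ℕ), (X + C (((c + (n - 1 - (j:ℕ)) + t + 1 : ℕ)) : ℝ)) with hp
  have h_monic : ∀ j, (p j).Monic := fun j =>
    monic_prod_of_monic _ _ fun t _ => monic_X_add_C _
  have h_deg : ∀ j : Fin n, (p j).natDegree = (j : ℕ) := by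
    intro j
    rw [hp]
    rw [natDegree_prod _ _ (fun t _ => (monic_X_add_C _).ne_zero)]
    rw [Finset.sum_congr rfl (fun t _ => natDegree_X_add_C _)]
    simp
  have hA : (H.submatrix (Equiv.refl (Fin n)) Fin.revPerm) =
      Matrix.of fun i j : Fin n => (((2*b + n + (i:ℕ)).factorial : ℝ))⁻¹ *
        ((Matrix.of fun i j : Fin n => (p j).eval (((i:ℕ) : ℝ))) i j) := by
    ext i j
    simp only [Matrix.submatrix_apply, Equiv.refl_apply, Matrix.of_apply, hH, hp, eval_prod]
    have hrev : ((Fin.revPerm j : Fin n) : ℕ) = n - 1 - (j : ℕ) := by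
      simp [Fin.revPerm, Fin.rev]
      omega
    rw [hrev]
    set K : ℕ := c + (i:ℕ) + (n - 1 - (j:ℕ)) with hK
    have hKj : K + (j:ℕ) = 2*b + n + (i:ℕ) := by
      have := j.isLt
      rw [hK, hc]
      omega
    have hfp := fact_prod K (j:ℕ)
    rw [hKj] at hfp
    have hcast : ((K.factorial : ℝ)) * ∏ m ∈ range (j:ℕ), ((K + m + 1 : ℕ) : ℝ)
        = (((2*b + n + (i:ℕ)).factorial : ℝ)) := by
      rw [← Nat.cast_prod, ← Nat.cast_mul, hfp]
    have hKne : ((K.factorial : ℝ)) ≠ 0 := by exact_mod_cast K.factorial_ne_zero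
    have hBne : (((2*b + n + (i:ℕ)).factorial : ℝ)) ≠ 0 := by
      exact_mod_cast (2*b + n + (i:ℕ)).factorial_ne_zero
    have hprod : ∏ t ∈ range (j:ℕ), eval ((i:ℕ) : ℝ) (X + C (((c + (n - 1 - (j:ℕ)) + t + 1 : ℕ)) : ℝ))
        = ∏ m ∈ range (j:ℕ), ((K + m + 1 : ℕ) : ℝ) := by
      refine prod_congr rfl fun t _ => ?_
      rw [eval_add, eval_X, eval_C, hK]
      push_cast
      ring
    rw [hprod]
    have hPne : (∏ m ∈ range (j:ℕ), ((K + m + 1 : ℕ) : ℝ)) ≠ 0 :=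
      Finset.prod_ne_zero_iff.mpr fun m _ => Nat.cast_ne_zero.mpr (by omega)
    rw [← hcast, mul_inv, mul_assoc, inv_mul_cancel₀ hPne, mul_one]
  rw [habs, hA, Matrix.det_mul_column, ← Matrix.det_eval_matrixOfPolynomials_eq_det_vandermonde
      (fun i : Fin n => ((i:ℕ) : ℝ)) p h_deg h_monic, vdm_nat, abs_mul]
  -- Step 4 : clean up: everything is a product of positives
  rw [abs_of_nonneg (Finset.prod_nonneg fun i _ => by positivity),
      abs_of_nonneg (Finset.prod_nonneg fun i _ => by positivity),
      abs_of_nonneg (Finset.prod_nonneg fun i _ => by positivity)]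
  rw [Fin.prod_univ_eq_prod_range (fun i => ((b + i).factorial : ℝ)),
      Fin.prod_univ_eq_prod_range (fun i => (((2*b + n + i).factorial : ℝ))⁻¹)]
  rw [← Finset.prod_mul_distrib, ← Finset.prod_mul_distrib, ← Finset.prod_mul_distrib]
  refine prod_congr rfl fun j _ => ?_
  rw [div_eq_mul_inv]
  ring

/-! ### Putting everything together -/

lemma one_le_prod_dd_mul (b n : ℕ) (hn : 0 < n) :
    (1 : ℝ) ≤ (∏ i ∈ range n, (dd (2*b + n + i) : ℝ)) *
      ∏ j ∈ range n, ((b + j).factorial : ℝ) * ((b + j).factorial : ℝ) * (j.factorial : ℝ) /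
        ((2*b + n + j).factorial : ℝ) := by
  classical
  set M : Matrix (Fin n) (Fin n) ℝ :=
    Matrix.of fun i j : Fin n => ((b + (i:ℕ)).factorial : ℝ) * ((b + (j:ℕ)).factorial : ℝ) /
      ((2*b + 1 + (i:ℕ) + (j:ℕ)).factorial : ℝ) with hM
  have spec : ∀ i j : Fin n, ∃ z : ℤ,
      (z : ℝ) = (dd (2*b + n + (i:ℕ)) : ℝ) * M i j := by
    intro i j
    obtain ⟨z, hz⟩ := exists_int (2*b + n + (i:ℕ)) (b + (i:ℕ)) (b + (j:ℕ))
      (by have := j.isLt; omega)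
    refine ⟨z, ?_⟩
    rw [hz, hM]
    have e : (b + (i:ℕ)) + (b + (j:ℕ)) + 1 = 2*b + 1 + (i:ℕ) + (j:ℕ) := by omega
    rw [e]
    rfl
  set Z : Matrix (Fin n) (Fin n) ℤ :=
    Matrix.of fun i j : Fin n => Classical.choose (spec i j) with hZ
  have hZmap : Z.map (fun z : ℤ => (z : ℝ)) =
      Matrix.of fun i j : Fin n => (dd (2*b + n + (i:ℕ)) : ℝ) * M i j := by
    ext i j
    simp only [Matrix.map_apply, hZ, Matrix.of_apply]
    exact Classical.choose_spec (spec i j)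
  have hdet : ((Z.det : ℤ) : ℝ) =
      (∏ i : Fin n, (dd (2*b + n + (i:ℕ)) : ℝ)) * M.det := by
    have := RingHom.map_det (Int.castRingHom ℝ) Z
    rw [show ((Z.det : ℤ) : ℝ) = (Int.castRingHom ℝ) Z.det from rfl, this,
      RingHom.mapMatrix_apply]
    rw [show Z.map (Int.castRingHom ℝ) = Z.map (fun z : ℤ => (z : ℝ)) from rfl, hZmap,
      Matrix.det_mul_column]
  have habsM : |M.det| = ∏ j ∈ range n, ((b + j).factorial : ℝ) * ((b + j).factorial : ℝ) *
      (j.factorial : ℝ) / ((2*b + n + j).factorial : ℝ) := abs_det_M b n hn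
  have hMdet_ne : M.det ≠ 0 := by
    intro h
    rw [h, abs_zero] at habsM
    have : (0:ℝ) < ∏ j ∈ range n, ((b + j).factorial : ℝ) * ((b + j).factorial : ℝ) *
        (j.factorial : ℝ) / ((2*b + n + j).factorial : ℝ) :=
      Finset.prod_pos fun j _ => by positivity
    linarith [this]
  have hZdet_ne : Z.det ≠ 0 := by
    intro h
    rw [h] at hdet
    simp only [Int.cast_zero] at hdet
    have hprod : (0:ℝ) < ∏ i : Fin n, (dd (2*b + n + (i:ℕ)) : ℝ) :=
      Finset.prod_pos fun i _ => by exact_mod_cast dd_pos _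
    exact hMdet_ne (by
      rcases mul_eq_zero.mp hdet.symm with h' | h'
      · exact absurd h' hprod.ne'
      · exact h')
  have h1 : (1 : ℝ) ≤ |((Z.det : ℤ) : ℝ)| := by
    have := Int.one_le_abs hZdet_ne
    calc (1:ℝ) ≤ ((|Z.det| : ℤ) : ℝ) := by exact_mod_cast this
    _ = |((Z.det : ℤ) : ℝ)| := by push_cast; rfl
  calc (1 : ℝ) ≤ |((Z.det : ℤ) : ℝ)| := h1
  _ = (∏ i : Fin n, (dd (2*b + n + (i:ℕ)) : ℝ)) * |M.det| := by
      rw [hdet, abs_mul, abs_of_nonneg (Finset.prod_nonneg fun i _ => by positivity)]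
  _ = (∏ i ∈ range n, (dd (2*b + n + i) : ℝ)) *
      ∏ j ∈ range n, ((b + j).factorial : ℝ) * ((b + j).factorial : ℝ) * (j.factorial : ℝ) /
        ((2*b + n + j).factorial : ℝ) := by
      rw [habsM, Fin.prod_univ_eq_prod_range (fun i => (dd (2*b + n + i) : ℝ))]

end PsiOneAux

open PsiOneAux Finset in
/-- For `s > 0` and `n` with `⌊sn⌋ ≥ 2`,
`ψ₁(2⌊sn⌋+2n) − ψ₁(2⌊sn⌋+n) ≥ −log Δ_n(s)`. -/
theorem psi_one_lower_bound (s : ℝ) (hs : 0 < s) (n : ℕ) (hn : 0 < n)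
    (hfloor : 2 ≤ ⌊s * n⌋₊) :
    chebyshevPsi₁ (2 * ⌊s * n⌋₊ + 2 * n) - chebyshevPsi₁ (2 * ⌊s * n⌋₊ + n) ≥
      -Real.log (Δ s n) := by
  set q : ℕ := ⌊s * n⌋₊ with hq
  set b : ℕ := q - 1 with hb
  -- rewrite Δ with b
  have hΔ : Δ s n = ∏ j ∈ range n, ((b + j).factorial : ℝ) * ((b + j).factorial : ℝ) *
      (j.factorial : ℝ) / ((2*b + n + j).factorial : ℝ) := by
    rw [Δ]
    refine prod_congr rfl fun j _ => ?_
    rw [← hq]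
    have e1 : q + j - 1 = b + j := by omega
    have e2 : q + q + n + j - 2 = 2*b + n + j := by omega
    rw [e1, e2]
  have hΔpos : 0 < Δ s n := by
    rw [hΔ]; exact Finset.prod_pos fun j _ => by positivity
  have hkey := one_le_prod_dd_mul b n hn
  rw [← hΔ] at hkey
  have hPpos : (0:ℝ) < ∏ i ∈ range n, (dd (2*b + n + i) : ℝ) :=
    Finset.prod_pos fun i _ => by exact_mod_cast dd_pos _
  -- take logs
  have hlog : -Real.log (Δ s n) ≤ Real.log (∏ i ∈ range n, (dd (2*b + n + i) : ℝ)) := by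
    have := Real.log_le_log (by norm_num) hkey
    rw [Real.log_one, Real.log_mul hPpos.ne' hΔpos.ne'] at this
    linarith
  have hlogsum : Real.log (∏ i ∈ range n, (dd (2*b + n + i) : ℝ)) =
      ∑ i ∈ range n, Real.log (dd (2*b + n + i)) :=
    Real.log_prod fun i _ => by exact_mod_cast (dd_pos _).ne'
  have hsum_le : ∑ i ∈ range n, Real.log (dd (2*b + n + i)) ≤
      ∑ i ∈ range n, chebyshevPsi (2*q + n + 1 + i) := by
    refine Finset.sum_le_sum fun i _ => ?_
    calc Real.log (dd (2*b + n + i)) ≤ chebyshevPsi (2*b + n + i) := log_dd_le_psi _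
    _ ≤ chebyshevPsi (2*q + n + 1 + i) := psi_mono (by omega)
  -- the ψ₁ difference
  have hdiff : chebyshevPsi₁ (2 * q + 2 * n) - chebyshevPsi₁ (2 * q + n) =
      ∑ i ∈ range n, chebyshevPsi (2*q + n + 1 + i) := by
    have hIcc : Finset.Icc 1 (2 * q + 2 * n) =
        Finset.Icc 1 (2 * q + n) ∪ Finset.Ico (2*q + n + 1) (2*q + n + 1 + n) := by
      ext x
      simp only [Finset.mem_union, Finset.mem_Icc, Finset.mem_Ico]
      omega
    have hdisj : Disjoint (Finset.Icc 1 (2 * q + n))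
        (Finset.Ico (2*q + n + 1) (2*q + n + 1 + n)) := by
      rw [Finset.disjoint_left]
      intro x hx hx'
      simp only [Finset.mem_Icc] at hx
      simp only [Finset.mem_Ico] at hx'
      omega
    rw [chebyshevPsi₁, chebyshevPsi₁, hIcc, Finset.sum_union hdisj]
    rw [Finset.sum_Ico_eq_sum_range]
    simp only [add_sub_cancel_left]
    rw [show (2*q + n + 1 + n) - (2*q + n + 1) = n by omega]
  rw [ge_iff_le, hdiff]
  calc -Real.log (Δ s n) ≤ Real.log (∏ i ∈ range n, (dd (2*b + n + i) : ℝ)) := hlog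
  _ = ∑ i ∈ range n, Real.log (dd (2*b + n + i)) := hlogsum
  _ ≤ ∑ i ∈ range n, chebyshevPsi (2*q + n + 1 + i) := hsum_le
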